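/- Let r ≥ 1, let U ⊆ ℂ be open, let z ∈ U, let θ, η : U → M_r(ℂ) be twice differentiable at z with θ(z) and η(z) invertible, and let A ∈ M_r(ℂ). Then at the point z (writing ′ and ″ for first and second derivatives, taken entrywise): (i) (θη)⁻¹·A·(θη) + (θη)⁻¹·(θη)′ = η⁻¹·(θ⁻¹Aθ + θ⁻¹θ′)·η + η⁻¹η′ ; and (ii) Tr((θη)⁻¹·A·(θη)′) + (1/2)·Tr((θη)⁻¹·(θη)″) = Tr(θ⁻¹·A·θ′) + (1/2)·Tr(θ⁻¹·θ″) + Tr(η⁻¹·(θ⁻¹Aθ + θ⁻¹θ′)·η′) + (1/2)·Tr(η⁻¹·η″). -/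

import Mathlib

open Matrix

/-- Entrywise derivative of a matrix-valued function of one complex variable. -/
noncomputable def mderiv {r : ℕ} (f : ℂ → Matrix (Fin r) (Fin r) ℂ) (z : ℂ) :
    Matrix (Fin r) (Fin r) ℂ :=
  Matrix.of fun i j => deriv (fun w => f w i j) z

/-- Entrywise differentiability of a matrix-valued function at a point. -/
def MatDifferentiableAt {r : ℕ} (f : ℂ → Matrix (Fin r) (Fin r) ℂ) (z : ℂ) : Prop :=
  ∀ i j, DifferentiableAt ℂ (fun w => f w i j) z

lemma mderiv_mul {r : ℕ} {f g : ℂ → Matrix (Fin r) (Fin r) ℂ} {z : ℂ}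
    (hf : MatDifferentiableAt f z) (hg : MatDifferentiableAt g z) :
    mderiv (fun w => f w * g w) z = mderiv f z * g z + f z * mderiv g z := by
  ext i j
  simp only [mderiv, Matrix.of_apply, Matrix.add_apply, Matrix.mul_apply]
  rw [deriv_fun_sum (fun k _ => ((hf i k).fun_mul (hg k j)))]
  rw [← Finset.sum_add_distrib]
  congr 1; funext k
  rw [deriv_fun_mul (hf i k) (hg k j)]

lemma mderiv_add {r : ℕ} {f g : ℂ → Matrix (Fin r) (Fin r) ℂ} {z : ℂ}
    (hf : MatDifferentiableAt f z) (hg : MatDifferentiableAt g z) :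
    mderiv (fun w => f w + g w) z = mderiv f z + mderiv g z := by
  ext i j
  simp only [mderiv, Matrix.of_apply, Matrix.add_apply]
  rw [← deriv_fun_add (hf i j) (hg i j)]

lemma MatDifferentiableAt.mul' {r : ℕ} {f g : ℂ → Matrix (Fin r) (Fin r) ℂ} {z : ℂ}
    (hf : MatDifferentiableAt f z) (hg : MatDifferentiableAt g z) :
    MatDifferentiableAt (fun w => f w * g w) z := by
  intro i j
  have : (fun w => (f w * g w) i j) = fun w => ∑ k, f w i k * g w k j := by
    funext w; simp [Matrix.mul_apply]
  rw [this]
  exact DifferentiableAt.fun_sum fun k _ => (hf i k).fun_mul (hg k j)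

lemma mderiv_congr {r : ℕ} {f g : ℂ → Matrix (Fin r) (Fin r) ℂ} {z : ℂ}
    (h : f =ᶠ[nhds z] g) : mderiv f z = mderiv g z := by
  ext i j
  simp only [mderiv, Matrix.of_apply]
  apply Filter.EventuallyEq.deriv_eq
  filter_upwards [h] with w hw; rw [hw]

lemma key1 {r : ℕ} (M N Mi Ni P Q A : Matrix (Fin r) (Fin r) ℂ)
    (hM1 : Mi * M = 1) :
    Ni * Mi * A * (M * N) + Ni * Mi * (P * N + M * Q)
      = Ni * (Mi * A * M + Mi * P) * N + Ni * Q := by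
  have h5 : Ni * Mi * (M * Q) = Ni * Q := by
    rw [mul_assoc, ← mul_assoc Mi M Q, hM1, one_mul]
  simp only [mul_add, add_mul, h5]
  simp only [mul_assoc]
  abel

lemma key2 {r : ℕ} (M N Mi Ni P Q R S A : Matrix (Fin r) (Fin r) ℂ)
    (hM1 : Mi * M = 1) (hN2 : N * Ni = 1) :
    trace (Ni * Mi * A * (P * N + M * Q))
      + (1 / 2 : ℂ) * trace (Ni * Mi * ((R * N + P * Q) + (P * Q + M * S)))
    = trace (Mi * A * P) + (1 / 2 : ℂ) * trace (Mi * R)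
      + trace (Ni * (Mi * A * M + Mi * P) * Q) + (1 / 2 : ℂ) * trace (Ni * S) := by
  have trconj : ∀ X, trace (Ni * X * N) = trace X := fun X => by
    rw [Matrix.trace_mul_comm, ← mul_assoc, hN2, one_mul]
  have e1 : trace (Ni * Mi * A * (P * N)) = trace (Mi * A * P) := by
    rw [show Ni * Mi * A * (P * N) = Ni * (Mi * A * P) * N by simp [mul_assoc], trconj]
  have e2 : trace (Ni * Mi * A * (M * Q)) = trace (Ni * (Mi * A * M) * Q) := by
    congr 1; simp [mul_assoc]
  have e3 : trace (Ni * Mi * (R * N)) = trace (Mi * R) := by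
    rw [show Ni * Mi * (R * N) = Ni * (Mi * R) * N by simp [mul_assoc], trconj]
  have e4 : trace (Ni * Mi * (P * Q)) = trace (Ni * (Mi * P) * Q) := by
    congr 1; simp [mul_assoc]
  have e5 : trace (Ni * Mi * (M * S)) = trace (Ni * S) := by
    congr 1; rw [mul_assoc, ← mul_assoc Mi M S, hM1, one_mul]
  simp only [mul_add, add_mul, Matrix.trace_add, e1, e2, e3, e4, e5]
  ring

/-- cocycle property of the extended-connection transformation
T(θ): (A, a) ↦ (θ⁻¹Aθ + θ⁻¹θ′, a + Tr(θ⁻¹Aθ′) + ½Tr(θ⁻¹θ″)), namely T(θη) = T(η)∘T(θ). -/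
theorem stmt2 (r : ℕ) (hr : 1 ≤ r) (U : Set ℂ) (hU : IsOpen U) (z : ℂ) (hz : z ∈ U)
    (θ η : ℂ → Matrix (Fin r) (Fin r) ℂ) (A : Matrix (Fin r) (Fin r) ℂ)
    (hθ : ∀ w ∈ U, MatDifferentiableAt θ w)
    (hθ' : MatDifferentiableAt (fun w => mderiv θ w) z)
    (hη : ∀ w ∈ U, MatDifferentiableAt η w)
    (hη' : MatDifferentiableAt (fun w => mderiv η w) z)
    (hθz : IsUnit (θ z)) (hηz : IsUnit (η z)) :
    ((θ z * η z)⁻¹ * A * (θ z * η z) + (θ z * η z)⁻¹ * mderiv (fun w => θ w * η w) z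
      = (η z)⁻¹ * ((θ z)⁻¹ * A * θ z + (θ z)⁻¹ * mderiv θ z) * η z
          + (η z)⁻¹ * mderiv η z)
    ∧
    (trace ((θ z * η z)⁻¹ * A * mderiv (fun w => θ w * η w) z)
        + (1 / 2 : ℂ) *
            trace ((θ z * η z)⁻¹ * mderiv (fun w => mderiv (fun t => θ t * η t) w) z)
      = trace ((θ z)⁻¹ * A * mderiv θ z)
          + (1 / 2 : ℂ) * trace ((θ z)⁻¹ * mderiv (fun w => mderiv θ w) z)
          + trace ((η z)⁻¹ * ((θ z)⁻¹ * A * θ z + (θ z)⁻¹ * mderiv θ z) * mderiv η z)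
          + (1 / 2 : ℂ) * trace ((η z)⁻¹ * mderiv (fun w => mderiv η w) z)) := by
  have hθd := hθ z hz
  have hηd := hη z hz
  have hdM : IsUnit (θ z).det := (Matrix.isUnit_iff_isUnit_det _).mp hθz
  have hdN : IsUnit (η z).det := (Matrix.isUnit_iff_isUnit_det _).mp hηz
  have hM1 : (θ z)⁻¹ * θ z = 1 := Matrix.nonsing_inv_mul _ hdM
  have hN2 : η z * (η z)⁻¹ = 1 := Matrix.mul_nonsing_inv _ hdN
  have d1 : mderiv (fun w => θ w * η w) z = mderiv θ z * η z + θ z * mderiv η z :=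
    mderiv_mul hθd hηd
  have hev : (fun w => mderiv (fun t => θ t * η t) w)
      =ᶠ[nhds z] (fun w => mderiv θ w * η w + θ w * mderiv η w) := by
    filter_upwards [hU.mem_nhds hz] with w hw
    exact mderiv_mul (hθ w hw) (hη w hw)
  have d2 : mderiv (fun w => mderiv (fun t => θ t * η t) w) z
      = (mderiv (fun w => mderiv θ w) z * η z + mderiv θ z * mderiv η z)
        + (mderiv θ z * mderiv η z + θ z * mderiv (fun w => mderiv η w) z) := by
    rw [mderiv_congr hev,
      mderiv_add (hθ'.mul' hηd) (hθd.mul' hη'),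
      mderiv_mul hθ' hηd, mderiv_mul hθd hη']
  rw [d1, d2, Matrix.mul_inv_rev]
  exact ⟨key1 _ _ _ _ _ _ _ hM1, key2 _ _ _ _ _ _ _ _ _ hM1 hN2⟩
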